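/- Let I be a weakly stable monomial ideal of R = K[X_1,...,X_n]. Then its saturation satisfies I^sat = I : X_n^∞, i.e., the saturation of I with respect to the maximal graded ideal equals the union over k ≥ 1 of (I : X_n^k). -/

import Mathlib

open MvPolynomial DirectSum

namespace LC

abbrev Poly (n : ℕ) (K : Type) [Field K] := MvPolynomial (Fin n) K

variable {n : ℕ} {K : Type} [Field K]

/-- The degree `d` piece of `R/I` as a `K`-subspace (zero in negative degrees). -/
noncomputable def pieceQ (I : Ideal (Poly n K)) (d : ℤ) : Submodule K (Poly n K ⧸ I) :=
  if 0 ≤ d then (homogeneousSubmodule (Fin n) K d.toNat).map (I.mkQ.restrictScalars K) else ⊥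

/-- The Hilbert function of `R/I`. -/
noncomputable def hilbQ (I : Ideal (Poly n K)) (d : ℤ) : ℕ :=
  Module.finrank K (pieceQ I d)

noncomputable def xProd (S : Finset (Fin n)) : Poly n K := ∏ i ∈ S, X i

noncomputable def mulQ (I : Ideal (Poly n K)) (c : Poly n K) :
    (Poly n K ⧸ I) →ₗ[Poly n K] (Poly n K ⧸ I) := LinearMap.lsmul _ _ c

/-- The localization of `R/I` at the product of the variables in `S`, realized as the direct
limit of the system `R/I → R/I → ⋯` of multiplication maps. -/
abbrev LS (I : Ideal (Poly n K)) (S : Finset (Fin n)) : Type :=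
  Module.DirectLimit (R := Poly n K) (fun _ : ℕ => Poly n K ⧸ I)
    (fun k k' _ => mulQ I (xProd S ^ (k' - k)))

noncomputable instance (I : Ideal (Poly n K)) (S : Finset (Fin n)) : Module K (LS I S) :=
  Module.compHom _ (algebraMap K (Poly n K))

instance (I : Ideal (Poly n K)) (S : Finset (Fin n)) : IsScalarTower K (Poly n K) (LS I S) :=
  ⟨fun k r m => by
    show (k • r) • m = (algebraMap K (Poly n K) k) • (r • m)
    rw [Algebra.smul_def, mul_smul]⟩

noncomputable instance (I : Ideal (Poly n K)) (S : Finset (Fin n)) : AddCommGroup (LS I S) :=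
  Module.DirectLimit.addCommGroup _ _

/-- The canonical map from the `k`-th copy of `R/I` into the localization. -/
noncomputable abbrev ofLS (I : Ideal (Poly n K)) (S : Finset (Fin n)) (k : ℕ) :
    (Poly n K ⧸ I) →ₗ[Poly n K] LS I S :=
  Module.DirectLimit.of (Poly n K) ℕ (fun _ : ℕ => Poly n K ⧸ I)
    (fun k k' _ => mulQ I (xProd S ^ (k' - k))) k

/-- The degree `j` piece of the localization (elements `m/xS^k` with `m` of degree
`j + k·|S|`). -/
noncomputable def pieceLS (I : Ideal (Poly n K)) (S : Finset (Fin n)) (j : ℤ) :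
    Submodule K (LS I S) :=
  ⨆ k : ℕ, (pieceQ I (j + k * S.card)).map ((ofLS I S k).restrictScalars K)

/-- The natural map between localizations corresponding to `S ⊆ insert i S`. -/
noncomputable def toInsert (I : Ideal (Poly n K)) (S : Finset (Fin n)) (i : Fin n)
    (hi : i ∉ S) : LS I S →ₗ[Poly n K] LS I (insert i S) :=
  Module.DirectLimit.lift _ _ _ _
    (fun k => (ofLS I (insert i S) k) ∘ₗ mulQ I (X i ^ k)) (by
      intro k k' hkk' x
      dsimp only [LinearMap.comp_apply]
      obtain ⟨d, rfl⟩ := Nat.exists_eq_add_of_le hkk'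
      have hf : ofLS I (insert i S) k (mulQ I (X i ^ k) x)
          = ofLS I (insert i S) (k + d) (mulQ I (xProd (insert i S) ^ (k + d - k))
              (mulQ I (X i ^ k) x)) :=
        (Module.DirectLimit.of_f (R := Poly n K) (ι := ℕ)
          (G := fun _ : ℕ => Poly n K ⧸ I)
          (f := fun k k' _ => mulQ I (xProd (insert i S) ^ (k' - k)))
          (hij := Nat.le_add_right k d) (x := mulQ I (X i ^ k) x)).symm
      rw [hf]
      congr 1
      simp only [mulQ, LinearMap.lsmul_apply, smul_smul]
      congr 1
      simp only [xProd, Finset.prod_insert hi, Nat.add_sub_cancel_left, mul_pow, pow_add]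
      ring)

/-- The index set of the `p`-th term of the Čech complex. -/
abbrev Idx (n p : ℕ) := {S : Finset (Fin n) // S.card = p}

/-- The `p`-th term of the Čech complex of `R/I` on the variables. -/
abbrev cech (I : Ideal (Poly n K)) (p : ℕ) : Type :=
  ⨁ S : Idx n p, LS I S.1

noncomputable instance (I : Ideal (Poly n K)) (p : ℕ) : AddCommGroup (cech I p) := inferInstance

/-- The Čech differential. -/
noncomputable def cechD (I : Ideal (Poly n K)) (p : ℕ) :
    cech I p →ₗ[Poly n K] cech I (p + 1) :=
  DirectSum.toModule _ _ _ (fun S =>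
    ∑ i ∈ ((Finset.univ : Finset (Fin n)) \ S.1).attach,
      ((-1 : ℤ) ^ (S.1.filter (· < i.1)).card) •
        ((DirectSum.lof (Poly n K) (Idx n (p + 1)) (fun T => LS I T.1)
            ⟨insert i.1 S.1, by
              rw [Finset.card_insert_of_notMem (Finset.mem_sdiff.mp i.2).2, S.2]⟩) ∘ₗ
          toInsert I S.1 i.1 (Finset.mem_sdiff.mp i.2).2))

/-- The degree `j` piece of the `p`-th Čech module. -/
noncomputable def pieceCech (I : Ideal (Poly n K)) (p : ℕ) (j : ℤ) :
    Submodule K (cech I p) :=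
  ⨆ S : Idx n p,
    (pieceLS I S.1 j).map
      ((DirectSum.lof (Poly n K) (Idx n p) (fun T => LS I T.1) S).restrictScalars K)

/-- Degree `j` cocycles in homological degree `i`. -/
noncomputable def cocycles (I : Ideal (Poly n K)) (i : ℕ) (j : ℤ) :
    Submodule K (cech I i) :=
  pieceCech I i j ⊓ LinearMap.ker ((cechD I i).restrictScalars K)

/-- Degree `j` coboundaries in homological degree `i`. -/
noncomputable def boundaries (I : Ideal (Poly n K)) (i : ℕ) (j : ℤ) :
    Submodule K (cech I i) :=
  match i with
  | 0 => ⊥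
  | i + 1 => (pieceCech I i j).map ((cechD I i).restrictScalars K)

/-- The degree `j` piece of the `i`-th local cohomology module `H^i_𝔪(R/I)`, computed via the
Čech complex on the variables. -/
abbrev lcPiece (I : Ideal (Poly n K)) (i : ℕ) (j : ℤ) : Type :=
  cocycles I i j ⧸ Submodule.comap (cocycles I i j).subtype (boundaries I i j)

/-- `h I i j = dim_K H^i_𝔪(R/I)_j`, the Hilbert function of local cohomology. -/
noncomputable def h (I : Ideal (Poly n K)) (i : ℕ) (j : ℤ) : ℕ :=
  Module.finrank K (lcPiece I i j)

/-! ### Further notions: saturation, monomial/lex/weakly stable ideals, Gin,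
dimension filtration, Cohen–Macaulayness -/

/-- The maximal graded ideal `(X_1, …, X_n)`. -/
noncomputable def mIdeal : Ideal (Poly n K) := Ideal.span (Set.range X)

/-- Saturation `I : 𝔪^∞`. -/
noncomputable def sat (I : Ideal (Poly n K)) : Ideal (Poly n K) :=
  ⨆ k : ℕ, Submodule.colon I ((mIdeal ^ k : Ideal (Poly n K)) : Set (Poly n K))

/-- Saturation `I : x^∞` with respect to a single element. -/
noncomputable def satX (x : Poly n K) (I : Ideal (Poly n K)) : Ideal (Poly n K) :=
  ⨆ k : ℕ, Submodule.colon I ((Ideal.span {x ^ k} : Ideal (Poly n K)) : Set (Poly n K))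

/-- A homogeneous ideal. -/
def IsHomog (I : Ideal (Poly n K)) : Prop :=
  ∀ f ∈ I, ∀ d : ℕ, (homogeneousComponent d f : Poly n K) ∈ I

/-- A monomial ideal. -/
def IsMonomialIdeal (I : Ideal (Poly n K)) : Prop :=
  ∀ f ∈ I, ∀ a ∈ f.support, (monomial a (1 : K)) ∈ I

/-- total degree of an exponent vector -/
def degE (a : Fin n →₀ ℕ) : ℕ := a.sum fun _ e => e

/-- The lexicographic order (with `X 0 > X 1 > ⋯`): `a <lex b`. -/
def lexLt (a b : Fin n →₀ ℕ) : Prop :=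
  ∃ i : Fin n, (∀ j : Fin n, j < i → a j = b j) ∧ a i < b i

/-- A lex(-segment) ideal. -/
def IsLexSegIdeal (L : Ideal (Poly n K)) : Prop :=
  IsMonomialIdeal L ∧
    ∀ a b : Fin n →₀ ℕ, degE a = degE b → monomial a (1 : K) ∈ L → lexLt a b →
      monomial b (1 : K) ∈ L

/-- `L = I^lex`: `L` is the lex ideal with the same Hilbert function as `I`. -/
def IsLexOf (I L : Ideal (Poly n K)) : Prop :=
  IsLexSegIdeal L ∧ ∀ d : ℤ, hilbQ I d = hilbQ L d

/-- `a ≤ b` in the degree reverse lexicographic order. -/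
def degRevLexLE (a b : Fin n →₀ ℕ) : Prop :=
  a = b ∨ degE a < degE b ∨
    (degE a = degE b ∧ ∃ i : Fin n, b i < a i ∧ ∀ j : Fin n, i < j → a j = b j)

/-- `a` is the leading exponent of `f` with respect to the order `le`. -/
def IsLeadExp (le : (Fin n →₀ ℕ) → (Fin n →₀ ℕ) → Prop) (f : Poly n K)
    (a : Fin n →₀ ℕ) : Prop :=
  a ∈ f.support ∧ ∀ b ∈ f.support, le b a

/-- The initial ideal of `I` with respect to the order `le`. -/
noncomputable def initialIdeal (le : (Fin n →₀ ℕ) → (Fin n →₀ ℕ) → Prop)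
    (I : Ideal (Poly n K)) : Ideal (Poly n K) :=
  Ideal.span {q | ∃ f ∈ I, ∃ a, IsLeadExp le f a ∧ q = monomial a (1 : K)}

/-- The linear change of coordinates associated with a matrix `g`. -/
noncomputable def subst (g : Fin n → Fin n → K) : Poly n K →ₐ[K] Poly n K :=
  aeval (fun i => ∑ j : Fin n, (C (g i j)) * X j)

/-- `J` is the generic initial ideal (reverse lexicographic order) of `I`: for all `g` in a
nonempty Zariski-open set of invertible matrices, `in_revlex (g • I) = J`. -/
def IsGin (I J : Ideal (Poly n K)) : Prop :=
  ∃ p : MvPolynomial (Fin n × Fin n) K, p ≠ 0 ∧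
    (∃ g : Fin n → Fin n → K, eval (fun q => g q.1 q.2) p ≠ 0) ∧
    ∀ g : Fin n → Fin n → K, eval (fun q => g q.1 q.2) p ≠ 0 →
      IsUnit (Matrix.of g).det ∧
        initialIdeal degRevLexLE (I.map (subst g)) = J

/-- `m(u)`: the largest variable index occurring in the monomial `u = X^a`. -/
noncomputable def maxVar (a : Fin n →₀ ℕ) (ha : a.support.Nonempty) : Fin n :=
  a.support.max' ha

/-- A weakly stable (Borel-type) monomial ideal. -/
def WeaklyStable (I : Ideal (Poly n K)) : Prop :=
  IsMonomialIdeal I ∧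
    ∀ a : Fin n →₀ ℕ, monomial a (1 : K) ∈ I → ∀ ha : a.support.Nonempty,
      ∀ j : Fin n, j < maxVar a ha →
        ∃ k : ℕ, monomial (Finsupp.erase (maxVar a ha) a + Finsupp.single j k) (1 : K) ∈ I

section DimFiltration

variable (P : Type) [CommRing P]

/-- The (Krull) dimension of a module. -/
noncomputable def mdim (M : Type) [AddCommGroup M] [Module P M] : WithBot (WithTop ℕ) :=
  ringKrullDim (P ⧸ Module.annihilator P M)

variable (M : Type) [AddCommGroup M] [Module P M]

/-- `dimFil M k` is the largest submodule of `M` of dimension at most `k`. -/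
noncomputable def dimFil (k : ℕ) : Submodule P M :=
  sSup {N : Submodule P M | mdim P N ≤ (k : WithBot (WithTop ℕ))}

/-- The predecessor filtration (`dimFil (k-1)`, with `M_{-1} = 0`). -/
noncomputable def dimFilPrev : ℕ → Submodule P M
  | 0 => ⊥
  | k + 1 => dimFil P M k

/-- The `k`-th quotient `M_k/M_{k-1}` of the dimension filtration. -/
noncomputable abbrev dimLayer (k : ℕ) : Type :=
  dimFil P M k ⧸ Submodule.comap (dimFil P M k).subtype (dimFilPrev P M k)

/-- A module is Cohen–Macaulay of dimension `k` iff it has dimension `k` and all its local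
cohomology (with support in the maximal graded ideal `J`) vanishes away from degree `k`. -/
noncomputable def IsCMofDim (J : Ideal P) (k : ℕ) (N : Type) [AddCommGroup N]
    [Module P N] : Prop :=
  mdim P N = (k : WithBot (WithTop ℕ)) ∧
    ∀ i : ℕ, i ≠ k → Subsingleton ((localCohomology J i).obj (ModuleCat.of P N))

/-- `M` is `i`-partially sequentially Cohen–Macaulay (with respect to the maximal graded
ideal `J`): each quotient of the dimension filtration in the range `i ≤ k ≤ dim M` is zero
or Cohen–Macaulay of dimension `k`. -/
noncomputable def IsPSCM (J : Ideal P) (i : ℕ) : Prop :=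
  ∀ k : ℕ, i ≤ k → (k : WithBot (WithTop ℕ)) ≤ mdim P M →
    Subsingleton (dimLayer P M k) ∨ IsCMofDim P J k (dimLayer P M k)

end DimFiltration

/-- `I^⟨k⟩`: the preimage in `R` of the `k`-th step of the dimension filtration of `R/I`. -/
noncomputable def satDim (I : Ideal (Poly n K)) (k : ℕ) : Ideal (Poly n K) :=
  Submodule.comap I.mkQ (dimFil (Poly n K) (Poly n K ⧸ I) k)

/-- `I^⟨k-1⟩` (so `I^⟨-1⟩ = I` when `k = 0`). -/
noncomputable def satDimPrev (I : Ideal (Poly n K)) (k : ℕ) : Ideal (Poly n K) :=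
  Submodule.comap I.mkQ (dimFilPrev (Poly n K) (Poly n K ⧸ I) k)

/-- The degree `d` piece of an ideal, as a `K`-subspace of the polynomial ring. -/
noncomputable def pieceI (J : Ideal (Poly n K)) (d : ℤ) : Submodule K (Poly n K) :=
  if 0 ≤ d then (Submodule.restrictScalars K J) ⊓ (homogeneousSubmodule (Fin n) K d.toNat)
  else ⊥

/-- The Hilbert function, in degree `j`, of the `k`-th unmixed layer
`U_k(R/I) = I^⟨k⟩/I^⟨k-1⟩`. -/
noncomputable def hilbLayer (I : Ideal (Poly n K)) (k : ℕ) (j : ℤ) : ℕ :=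
  Module.finrank K
    ((pieceI (satDim I k) j) ⧸
      Submodule.comap (pieceI (satDim I k) j).subtype (pieceI (satDimPrev I k) j))

/-- `R/I` and `R/L` have the same Björner–Wachs polynomial: all unmixed layers have the same
Hilbert functions. -/
def SameBW (I L : Ideal (Poly n K)) : Prop :=
  ∀ (k : ℕ) (j : ℤ), hilbLayer I k j = hilbLayer L k j

/-- Graded depth: the least homological degree in which local cohomology does not vanish. -/
noncomputable def gdepth (I : Ideal (Poly n K)) : ℕ :=
  sInf {i : ℕ | ∃ j : ℤ, h I i j ≠ 0}

/-- Restriction `I ∩ K[X_1, …, X_m]` of an ideal to a smaller polynomial ring. -/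
noncomputable def restr (m : ℕ) (hm : m ≤ n) (I : Ideal (Poly n K)) : Ideal (Poly m K) :=
  Ideal.comap (rename (Fin.castLE hm) : Poly m K →ₐ[K] Poly n K) I

/-- Two ideals (in possibly different polynomial rings) have the same Hilbert polynomial iff
their Hilbert functions eventually agree. -/
def SameHilbPoly {m m' : ℕ} (I : Ideal (Poly m K)) (I' : Ideal (Poly m' K)) : Prop :=
  ∃ N : ℤ, ∀ j : ℤ, N ≤ j → hilbQ I j = hilbQ I' j

/-- A universal lex ideal: a lex ideal generated by at most `n` elements. -/
def IsUniversalLex (L : Ideal (Poly n K)) : Prop :=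
  IsLexSegIdeal L ∧ ∃ s : Finset (Poly n K), s.card ≤ n ∧ Ideal.span (s : Set (Poly n K)) = L

/-- A critical ideal: its Hilbert function is that of a universal lex ideal. -/
def IsCritical (I : Ideal (Poly n K)) : Prop :=
  ∃ L : Ideal (Poly n K), IsUniversalLex L ∧ ∀ d : ℤ, hilbQ I d = hilbQ L d

/-- One consecutive cancellation: for some `i` and `j`, decrease `c i j` and `c (i+1) j`
by one. -/
def CancelStep (c c' : ℕ → ℤ → ℕ) : Prop :=
  ∃ (i : ℕ) (j : ℤ), c i j = c' i j + 1 ∧ c (i + 1) j = c' (i + 1) j + 1 ∧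
    ∀ (i' : ℕ) (j' : ℤ), j' ≠ j ∨ (i' ≠ i ∧ i' ≠ i + 1) → c i' j' = c' i' j'

/-- `c'` is obtained from `c` by a finite sequence of consecutive cancellations. -/
def ObtainedByCancellations (c c' : ℕ → ℤ → ℕ) : Prop :=
  Relation.ReflTransGen CancelStep c c'

end LC

section SatAux
open LC MvPolynomial Pointwise

variable {n : ℕ} {K : Type} [Field K]

lemma LCaux.degE_eq (a : Fin n →₀ ℕ) : degE a = ∑ j, a j :=
  Finsupp.sum_fintype _ _ (fun _ => rfl)

lemma LCaux.mIdeal_eq : (mIdeal : Ideal (Poly n K)) = Ideal.span (Set.range X) := rfl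

lemma LCaux.pow_m_le (N : ℕ) :
    (mIdeal : Ideal (Poly n K)) ^ N ≤
      Ideal.span {q | ∃ a : Fin n →₀ ℕ, N ≤ degE a ∧ q = monomial a (1 : K)} := by
  induction N with
  | zero =>
    rw [pow_zero, Ideal.one_eq_top]
    refine top_le_iff.mpr ((Ideal.eq_top_iff_one _).mpr (Ideal.subset_span ?_))
    exact ⟨0, Nat.zero_le _, by simp⟩
  | succ N ih =>
    rw [pow_succ]
    calc (mIdeal : Ideal (Poly n K)) ^ N * mIdeal
        ≤ Ideal.span {q | ∃ a : Fin n →₀ ℕ, N ≤ degE a ∧ q = monomial a (1 : K)} *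
            Ideal.span (Set.range X) := Ideal.mul_mono ih (le_of_eq LCaux.mIdeal_eq)
      _ = Ideal.span (({q | ∃ a : Fin n →₀ ℕ, N ≤ degE a ∧ q = monomial a (1 : K)} :
            Set (Poly n K)) * Set.range X) := Ideal.span_mul_span' _ _
      _ ≤ Ideal.span {q | ∃ a : Fin n →₀ ℕ, N + 1 ≤ degE a ∧ q = monomial a (1 : K)} := by
          refine Ideal.span_le.mpr ?_
          rintro q hq
          obtain ⟨s, ⟨a, ha, rfl⟩, t, ⟨i, rfl⟩, rfl⟩ := hq
          refine Ideal.subset_span ⟨a + Finsupp.single i 1, ?_, ?_⟩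
          · rw [LCaux.degE_eq] at ha ⊢
            simp only [Finsupp.add_apply, Finset.sum_add_distrib, Finsupp.single_apply]
            rw [Finset.sum_ite_eq]
            simp only [Finset.mem_univ, if_true]
            omega
          · have hX : (X i : Poly n K) = monomial (Finsupp.single i 1) 1 := by
              rw [← X_pow_eq_monomial, pow_one]
            show monomial a (1 : K) * X i = monomial (a + Finsupp.single i 1) 1
            rw [hX, monomial_mul, mul_one]

lemma LCaux.key (hn : 0 < n) (I : Ideal (Poly n K)) (hI : WeaklyStable I)
    (b : Fin n →₀ ℕ) (k : ℕ)
    (hmem : monomial (b + Finsupp.single (⟨n - 1, Nat.sub_lt hn Nat.one_pos⟩ : Fin n) k) (1 : K) ∈ I) :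
    ∃ N : ℕ, ∀ p ∈ (mIdeal ^ N : Ideal (Poly n K)), monomial b (1 : K) * p ∈ I := by
  have hne' : Nonempty (Fin n) := ⟨⟨0, hn⟩⟩
  set last : Fin n := ⟨n - 1, by omega⟩ with hlastdef
  have hlast_top : ∀ i : Fin n, i ≤ last := by
    intro i
    have := i.isLt
    simp only [Fin.le_def, hlastdef]
    omega
  have step : ∀ j : Fin n, ∃ M : ℕ, monomial b (1 : K) * X j ^ M ∈ I := by
    intro j
    rcases Nat.eq_zero_or_pos k with hk | hk
    · rw [hk, Finsupp.single_zero, add_zero] at hmem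
      exact ⟨0, by simpa using hmem⟩
    rcases eq_or_ne j last with hj | hj
    · refine ⟨k, ?_⟩
      rw [hj, X_pow_eq_monomial, monomial_mul, mul_one]
      exact hmem
    · set w := b + Finsupp.single last k with hw
      have hwsupp : last ∈ w.support := by
        rw [Finsupp.mem_support_iff, hw, Finsupp.add_apply, Finsupp.single_eq_same]
        omega
      have hne : w.support.Nonempty := ⟨last, hwsupp⟩
      have hmax : maxVar w hne = last := by
        refine le_antisymm (Finset.max'_le _ _ _ fun i _ => hlast_top i) ?_
        exact Finset.le_max' _ _ hwsupp
      have hjlt : j < maxVar w hne := by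
        rw [hmax]
        exact lt_of_le_of_ne (hlast_top j) hj
      obtain ⟨k', hk'⟩ := hI.2 w hmem hne j hjlt
      rw [hmax] at hk'
      have hew : Finsupp.erase last w = Finsupp.erase last b := by
        rw [hw, Finsupp.erase_add, Finsupp.erase_single, add_zero]
      refine ⟨k', ?_⟩
      have hkey : b + Finsupp.single j k' =
          (Finsupp.erase last w + Finsupp.single j k') + Finsupp.single last (b last) := by
        rw [hew, add_right_comm, Finsupp.erase_add_single]
      rw [X_pow_eq_monomial, monomial_mul, mul_one, hkey]
      have : (monomial ((Finsupp.erase last w + Finsupp.single j k') +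
          Finsupp.single last (b last)) (1 : K)) =
          monomial (Finsupp.erase last w + Finsupp.single j k') (1 : K) *
            monomial (Finsupp.single last (b last)) 1 := by
        rw [monomial_mul, mul_one]
      rw [this]
      exact Ideal.mul_mem_right _ _ hk'
  choose M hM using step
  set Mx := Finset.univ.sup M with hMxdef
  have hMx : ∀ j : Fin n, monomial b (1 : K) * X j ^ Mx ∈ I := by
    intro j
    have hle : M j ≤ Mx := Finset.le_sup (Finset.mem_univ j)
    have : Mx = M j + (Mx - M j) := by omega
    rw [this, pow_add, ← mul_assoc]
    exact Ideal.mul_mem_right _ _ (hM j)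
  refine ⟨n * Mx, fun p hp => ?_⟩
  have hsub : (mIdeal ^ (n * Mx) : Ideal (Poly n K)) ≤
      I.colon (Ideal.span {monomial b (1 : K)}) := by
    refine le_trans (LCaux.pow_m_le _) (Ideal.span_le.mpr ?_)
    rintro q ⟨a, ha, rfl⟩
    have hex : ∃ j : Fin n, Mx ≤ a j := by
      by_contra hcon
      push_neg at hcon
      have h1 : ∑ j : Fin n, a j < ∑ _j : Fin n, Mx :=
        Finset.sum_lt_sum_of_nonempty Finset.univ_nonempty (fun j _ => hcon j)
      rw [Finset.sum_const, Finset.card_univ, Fintype.card_fin, smul_eq_mul] at h1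
      rw [LCaux.degE_eq] at ha
      omega
    obtain ⟨j, hj⟩ := hex
    have ha2 : a = Finsupp.single j Mx + (a - Finsupp.single j Mx) := by
      ext i
      rw [Finsupp.add_apply, Finsupp.tsub_apply, Finsupp.single_apply]
      split_ifs with h
      · subst h
        omega
      · omega
    have hmono : (monomial a (1 : K)) =
        X j ^ Mx * monomial (a - Finsupp.single j Mx) 1 := by
      rw [X_pow_eq_monomial, monomial_mul, one_mul, ← ha2]
    rw [SetLike.mem_coe, Ideal.mem_colon_span_singleton, hmono]
    have hmem2 := Ideal.mul_mem_right (monomial (a - Finsupp.single j Mx) (1 : K)) _ (hMx j)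
    convert hmem2 using 1
    ring
  have hpc := hsub hp
  rw [Ideal.mem_colon_span_singleton] at hpc
  rw [mul_comm]
  exact hpc

end SatAux

open LC MvPolynomial in
/-- The saturation of a weakly stable monomial ideal can be computed by
saturating with respect to the last variable. -/
theorem weaklyStable_sat_eq_satX {n : ℕ} {K : Type} [Field K] (hn : 0 < n)
    (I : Ideal (Poly n K)) (hI : WeaklyStable I) :
    sat I = satX (X (⟨n - 1, by omega⟩ : Fin n)) I := by
  set last : Fin n := ⟨n - 1, by omega⟩ with hlastdef
  rw [sat, satX]
  apply le_antisymm
  · refine iSup_le fun k => le_trans ?_ (le_iSup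
      (fun k => Submodule.colon I ((Ideal.span {X last ^ k} : Ideal (Poly n K)) : Set (Poly n K))) k)
    refine Submodule.colon_mono le_rfl (SetLike.coe_subset_coe.mpr ?_)
    refine Ideal.span_le.mpr (Set.singleton_subset_iff.mpr ?_)
    exact SetLike.mem_coe.mpr (Ideal.pow_mem_pow (Ideal.subset_span (Set.mem_range_self last)) k)
  · refine iSup_le fun k => fun f hf => ?_
    have hfx : f * X last ^ k ∈ I := Ideal.mem_colon_span_singleton.mp hf
    have hkey : ∀ b : Fin n →₀ ℕ, ∃ N : ℕ, b ∈ f.support →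
        monomial b (1 : K) ∈ Submodule.colon I (((mIdeal : Ideal (Poly n K)) ^ N : Ideal (Poly n K)) : Set (Poly n K)) := by
      intro b
      by_cases hb : b ∈ f.support
      · have hsup : monomial (b + Finsupp.single last k) (1 : K) ∈ I := by
          apply hI.1 _ hfx
          rw [mem_support_iff, X_pow_eq_monomial, coeff_mul_monomial, mul_one]
          exact mem_support_iff.mp hb
        obtain ⟨N, hN⟩ := LCaux.key hn I hI b k hsup
        exact ⟨N, fun _ => Submodule.mem_colon.mpr fun p hp => by
          rw [smul_eq_mul]; exact hN p hp⟩
      · exact ⟨0, fun h => absurd h hb⟩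
    choose N hN using hkey
    set Nmax := f.support.sup N with hNdef
    refine le_iSup (fun k => Submodule.colon I (((mIdeal : Ideal (Poly n K)) ^ k : Ideal (Poly n K)) : Set (Poly n K))) Nmax ?_
    have hf2 : f = ∑ b ∈ f.support, monomial b (coeff b f) := as_sum f
    rw [hf2]
    refine Submodule.sum_mem _ fun b hb => ?_
    have h1 : monomial b (1 : K) ∈ Submodule.colon I (((mIdeal : Ideal (Poly n K)) ^ Nmax : Ideal (Poly n K)) : Set (Poly n K)) := by
      refine Submodule.colon_mono le_rfl (SetLike.coe_subset_coe.mpr (Ideal.pow_le_pow_right ?_)) (hN b hb)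
      exact Finset.le_sup hb
    have h2 : monomial b (coeff b f) = C (coeff b f) * monomial b 1 := by
      rw [C_mul_monomial, mul_one]
    rw [h2]
    exact Ideal.mul_mem_left _ _ h1
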